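/- The difference between the number of partitions of n into an even number of distinct parts and the number of partitions of n into an odd number of distinct parts equals (-1)^j if n = j(3j+1)/2 or n = j(3j-1)/2 for some integer j ≥ 0, and equals 0 otherwise. -/
import Mathlib

open Finset

/-- Exceptional (pentagonal staircase) finsets. -/
def excep (S : Finset ℕ) : Prop :=
  ∃ j : ℕ, 1 ≤ j ∧ (S = Finset.Icc j (2*j-1) ∨ S = Finset.Icc (j+1) (2*j))

lemma stair_exists (S : Finset ℕ) (h : S.Nonempty) : ∃ x, Finset.Icc x (S.max' h) ⊆ S := by
  exact ⟨S.max' h, by simp [Finset.Icc_self, Finset.singleton_subset_iff, S.max'_mem h]⟩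

/-- `stair S h` is the least `a` such that `Icc a (max S) ⊆ S`; the "staircase" at the
top of `S` is `Icc (stair S h) (max S)`. -/
def stair (S : Finset ℕ) (h : S.Nonempty) : ℕ := Nat.find (stair_exists S h)

lemma stair_subset (S : Finset ℕ) (h : S.Nonempty) :
    Finset.Icc (stair S h) (S.max' h) ⊆ S := Nat.find_spec (stair_exists S h)

lemma stair_le_max (S : Finset ℕ) (h : S.Nonempty) : stair S h ≤ S.max' h :=
  Nat.find_le (by simp [Finset.Icc_self, Finset.singleton_subset_iff, S.max'_mem h])

lemma stair_mem (S : Finset ℕ) (h : S.Nonempty) : stair S h ∈ S :=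
  stair_subset S h (Finset.mem_Icc.2 ⟨le_refl _, stair_le_max S h⟩)

lemma min'_le_stair (S : Finset ℕ) (h : S.Nonempty) : S.min' h ≤ stair S h :=
  S.min'_le _ (stair_mem S h)

lemma stair_pos (S : Finset ℕ) (h : S.Nonempty) (h0 : 0 ∉ S) : 1 ≤ stair S h := by
  rcases Nat.eq_zero_or_pos (stair S h) with he | he
  · exact absurd (he ▸ stair_mem S h) h0
  · exact he

lemma stair_pred_notMem (S : Finset ℕ) (h : S.Nonempty) (h0 : 0 ∉ S) :
    stair S h - 1 ∉ S := by
  intro hmem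
  have h1 := stair_pos S h h0
  have : Finset.Icc (stair S h - 1) (S.max' h) ⊆ S := by
    intro x hx
    rw [Finset.mem_Icc] at hx
    rcases Nat.eq_or_lt_of_le hx.1 with he | hl
    · exact he ▸ hmem
    · exact stair_subset S h (Finset.mem_Icc.2 ⟨by omega, hx.2⟩)
  exact Nat.find_min (stair_exists S h) (show stair S h - 1 < stair S h from by omega) this

/-- If `Icc b max ⊆ S` and `b-1 ∉ S` and `1 ≤ b`, then `stair S h = b`. -/
lemma stair_eq (S : Finset ℕ) (h : S.Nonempty) (b : ℕ) (hb1 : 1 ≤ b) (hbm : b ≤ S.max' h + 1)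
    (hsub : Finset.Icc b (S.max' h) ⊆ S) (hnot : b - 1 ∉ S) : stair S h = b := by
  have hle : stair S h ≤ b := Nat.find_le hsub
  rcases Nat.eq_or_lt_of_le hle with he | hl
  · exact he
  · exfalso
    apply hnot
    have hbm' : b ≤ S.max' h := by
      rcases Nat.lt_or_ge (S.max' h) b with h1 | h1
      · exfalso
        apply hnot
        have hbe : b - 1 = S.max' h := by omega
        exact hbe ▸ S.max'_mem h
      · exact h1
    exact stair_subset S h (Finset.mem_Icc.2 ⟨by omega, by omega⟩)

/-- If the minimum equals `stair`, the set is a full staircase. -/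
lemma full_of_min_eq (S : Finset ℕ) (h : S.Nonempty) (he : S.min' h = stair S h) :
    S = Finset.Icc (stair S h) (S.max' h) := by
  apply Finset.Subset.antisymm
  · intro x hx
    exact Finset.mem_Icc.2 ⟨he ▸ S.min'_le x hx, S.le_max' x hx⟩
  · exact stair_subset S h

lemma min'_Icc (a b : ℕ) (hab : a ≤ b) : (Finset.Icc a b).min' ⟨a, Finset.mem_Icc.2 ⟨le_refl _, hab⟩⟩ = a := by
  apply le_antisymm
  · exact Finset.min'_le _ _ (Finset.mem_Icc.2 ⟨le_refl _, hab⟩)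
  · exact Finset.le_min' _ _ _ (fun y hy => (Finset.mem_Icc.1 hy).1)

lemma max'_Icc (a b : ℕ) (hab : a ≤ b) : (Finset.Icc a b).max' ⟨a, Finset.mem_Icc.2 ⟨le_refl _, hab⟩⟩ = b := by
  apply le_antisymm
  · exact Finset.max'_le _ _ _ (fun y hy => (Finset.mem_Icc.1 hy).2)
  · exact Finset.le_max' _ b (Finset.mem_Icc.2 ⟨hab, le_refl _⟩)

/-- Franklin's involution. -/
def frank (S : Finset ℕ) : Finset ℕ :=
  if h : S.Nonempty then
    if S.min' h + stair S h ≤ S.max' h + 1 then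
      insert (S.max' h + 1) ((S.erase (S.min' h)).erase (S.max' h - S.min' h + 1))
    else
      insert (S.max' h + 1 - stair S h) (insert (stair S h - 1) (S.erase (S.max' h)))
  else ∅
/-- For a nonempty `T = Icc c d`, compute `max'`, `min'`, `stair`. -/
lemma icc_data (c d : ℕ) (hc : 1 ≤ c) (hcd : c ≤ d) (T : Finset ℕ) (hT : T.Nonempty)
    (he : T = Finset.Icc c d) :
    T.max' hT = d ∧ T.min' hT = c ∧ stair T hT = c := by
  subst he
  have hmax : (Finset.Icc c d).max' hT = d := max'_Icc c d hcd
  have hmin : (Finset.Icc c d).min' hT = c := min'_Icc c d hcd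
  refine ⟨hmax, hmin, ?_⟩
  apply stair_eq _ hT c hc
  · omega
  · rw [hmax]
  · intro hmem
    rw [Finset.mem_Icc] at hmem
    omega

lemma caseA (S : Finset ℕ) (h : S.Nonempty) (h0 : 0 ∉ S) (hx : ¬ excep S)
    (hA : S.min' h + stair S h ≤ S.max' h + 1) :
    0 ∉ frank S ∧ (frank S).sum id = S.sum id ∧ (frank S).card + 1 = S.card ∧
      ∃ _hfne : (frank S).Nonempty, ¬ excep (frank S) ∧ frank (frank S) = S := by
  set M := S.max' h with hMdef
  set m := S.min' h with hmdef
  set a := stair S h with hadef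
  have hmS : m ∈ S := S.min'_mem h
  have hMS : M ∈ S := S.max'_mem h
  have hm1 : 1 ≤ m := by
    rcases Nat.eq_zero_or_pos m with he | he
    · exact absurd (he ▸ hmS) h0
    · exact he
  have hmM : m ≤ M := S.min'_le _ hMS
  have haM : a ≤ M := stair_le_max S h
  have hma : m ≤ a := min'_le_stair S h
  have ha1 : 1 ≤ a := stair_pos S h h0
  have hpred : a - 1 ∉ S := stair_pred_notMem S h h0
  -- key inequality 2m ≤ M
  have h2m : 2 * m ≤ M := by
    by_contra hc
    push_neg at hc
    have ham : a = m := by omega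
    have hfull : S = Finset.Icc a M := full_of_min_eq S h (by rw [← hmdef, ← hadef, ham])
    have hM2 : M = 2 * m - 1 := by omega
    exact hx ⟨m, hm1, Or.inl (by rw [hfull, ham, hM2])⟩
  have hrunmem : M - m + 1 ∈ S := stair_subset S h (Finset.mem_Icc.2 ⟨by omega, by omega⟩)
  have hmne : m < M - m + 1 := by omega
  set T := insert (M + 1) ((S.erase m).erase (M - m + 1)) with hTdef
  have hfr : frank S = T := by
    rw [frank, dif_pos h, if_pos hA]
  have hMm1 : M - m + 1 ∈ S.erase m := Finset.mem_erase.2 ⟨by omega, hrunmem⟩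
  have hM1notinS : M + 1 ∉ S := fun hc => by have := S.le_max' _ hc; omega
  have hM1notin : M + 1 ∉ (S.erase m).erase (M - m + 1) := fun hc =>
    hM1notinS (Finset.mem_of_mem_erase (Finset.mem_of_mem_erase hc))
  have hTsub : ∀ x ∈ T, x = M + 1 ∨ (x ∈ S ∧ x ≠ m ∧ x ≠ M - m + 1) := by
    intro x hxT
    rcases Finset.mem_insert.1 hxT with he | he
    · exact Or.inl he
    · rw [Finset.mem_erase, Finset.mem_erase] at he
      exact Or.inr ⟨he.2.2, he.2.1, he.1⟩
  have hTmem : ∀ x, x ∈ S → x ≠ m → x ≠ M - m + 1 → x ∈ T := by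
    intro x hx h1 h2
    exact Finset.mem_insert_of_mem (Finset.mem_erase.2 ⟨h2, Finset.mem_erase.2 ⟨h1, hx⟩⟩)
  -- cardinality
  have hcard : T.card + 1 = S.card := by
    have h1 : T.card = ((S.erase m).erase (M - m + 1)).card + 1 :=
      Finset.card_insert_of_notMem hM1notin
    have h2 : ((S.erase m).erase (M - m + 1)).card = (S.erase m).card - 1 :=
      Finset.card_erase_of_mem hMm1
    have h3 : (S.erase m).card = S.card - 1 := Finset.card_erase_of_mem hmS
    have h4 : 1 ≤ (S.erase m).card := Finset.card_pos.2 ⟨_, hMm1⟩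
    omega
  -- sum
  have hsum : T.sum id = S.sum id := by
    have h1 : T.sum id = (M + 1) + ((S.erase m).erase (M - m + 1)).sum id :=
      Finset.sum_insert hM1notin
    have h2 : (M - m + 1) + ((S.erase m).erase (M - m + 1)).sum id = (S.erase m).sum id :=
      Finset.add_sum_erase _ id hMm1
    have h3 : m + (S.erase m).sum id = S.sum id := Finset.add_sum_erase _ id hmS
    omega
  -- 0 ∉ T
  have hT0 : 0 ∉ T := by
    intro hc
    rcases hTsub 0 hc with he | he
    · omega
    · exact h0 he.1
  have hTne : T.Nonempty := Finset.insert_nonempty _ _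
  -- max of T
  have hTmax : T.max' hTne = M + 1 := by
    apply le_antisymm
    · apply Finset.max'_le
      intro y hy
      rcases hTsub y hy with he | he
      · omega
      · have := S.le_max' y he.1
        omega
    · exact Finset.le_max' _ _ (Finset.mem_insert_self _ _)
  -- min of T is > m
  have hTminm : m < T.min' hTne := by
    rcases hTsub _ (T.min'_mem hTne) with he | he
    · omega
    · have h1 := S.min'_le _ he.1
      rcases Nat.eq_or_lt_of_le h1 with h2 | h2
      · exact absurd h2 (Ne.symm he.2.1)
      · exact h2
  -- stair of T
  have hTstair : stair T hTne = M - m + 2 := by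
    apply stair_eq _ hTne _ (by omega) (by omega)
    · intro x hxmem
      rw [Finset.mem_Icc, hTmax] at hxmem
      rcases Nat.eq_or_lt_of_le hxmem.2 with he | hl
      · exact he ▸ Finset.mem_insert_self _ _
      · apply hTmem x (stair_subset S h (Finset.mem_Icc.2 ⟨by omega, by omega⟩)) (by omega) (by omega)
    · intro hc
      rcases hTsub _ hc with he | he
      · omega
      · exact he.2.2 (by omega)
  -- frank T
  have hbranch : ¬ (T.min' hTne + stair T hTne ≤ T.max' hTne + 1) := by
    rw [hTstair, hTmax]
    omega
  have hTerase : T.erase (M + 1) = (S.erase m).erase (M - m + 1) := by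
    rw [hTdef, Finset.erase_insert hM1notin]
  have hback : frank T = S := by
    rw [frank, dif_pos hTne, if_neg hbranch, hTmax, hTstair]
    have e1 : M + 1 + 1 - (M - m + 2) = m := by omega
    have e2 : M - m + 2 - 1 = M - m + 1 := by omega
    rw [e1, e2, hTerase, Finset.insert_erase hMm1, Finset.insert_erase hmS]
  -- non-exceptional
  have hTexc : ¬ excep T := by
    rintro ⟨j, hj1, hcase | hcase⟩
    · obtain ⟨hd1, hd2, hd3⟩ := icc_data j (2*j-1) hj1 (by omega) T hTne hcase
      rw [hTmax] at hd1
      rw [hTstair] at hd3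
      omega
    · obtain ⟨hd1, hd2, hd3⟩ := icc_data (j+1) (2*j) (by omega) (by omega) T hTne hcase
      rw [hTmax] at hd1
      rw [hTstair] at hd3
      omega
  rw [hfr]
  exact ⟨hT0, hsum, hcard, hTne, hTexc, hback⟩
lemma caseB (S : Finset ℕ) (h : S.Nonempty) (h0 : 0 ∉ S) (hx : ¬ excep S)
    (hB : ¬ (S.min' h + stair S h ≤ S.max' h + 1)) :
    0 ∉ frank S ∧ (frank S).sum id = S.sum id ∧ S.card + 1 = (frank S).card ∧
      ∃ _hfne : (frank S).Nonempty, ¬ excep (frank S) ∧ frank (frank S) = S := by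
  set M := S.max' h with hMdef
  set m := S.min' h with hmdef
  set a := stair S h with hadef
  push_neg at hB
  have hmS : m ∈ S := S.min'_mem h
  have hMS : M ∈ S := S.max'_mem h
  have hm1 : 1 ≤ m := by
    rcases Nat.eq_zero_or_pos m with he | he
    · exact absurd (he ▸ hmS) h0
    · exact he
  have hmM : m ≤ M := S.min'_le _ hMS
  have haM : a ≤ M := stair_le_max S h
  have hma : m ≤ a := min'_le_stair S h
  have ha1 : 1 ≤ a := stair_pos S h h0
  have hpred : a - 1 ∉ S := stair_pred_notMem S h h0
  have ha2 : 2 ≤ a := by omega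
  have hkm : M + 1 - a < m := by omega
  have hknotin : M + 1 - a ∉ S := fun hc => by have := S.min'_le _ hc; omega
  -- M ≠ 2a - 2
  have hM2a : M ≠ 2 * a - 2 := by
    intro hMe
    have hmeq : m = a := by omega
    have hfull : S = Finset.Icc a M := full_of_min_eq S h (by rw [← hmdef, ← hadef, hmeq])
    apply hx
    refine ⟨a - 1, by omega, Or.inr ?_⟩
    rw [hfull]
    congr 1 <;> omega
  have hane : a - 1 ≠ M + 1 - a := by omega
  set T := insert (M + 1 - a) (insert (a - 1) (S.erase M)) with hTdef
  have hfr : frank S = T := by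
    rw [frank, dif_pos h, if_neg (by omega)]
  have ha1notin : a - 1 ∉ S.erase M := fun hc => hpred (Finset.mem_of_mem_erase hc)
  have hknotin2 : M + 1 - a ∉ insert (a - 1) (S.erase M) := by
    intro hc
    rcases Finset.mem_insert.1 hc with he | he
    · omega
    · exact hknotin (Finset.mem_of_mem_erase he)
  have hTsub : ∀ x ∈ T, x = M + 1 - a ∨ x = a - 1 ∨ (x ∈ S ∧ x ≠ M) := by
    intro x hxT
    rcases Finset.mem_insert.1 hxT with he | he
    · exact Or.inl he
    rcases Finset.mem_insert.1 he with he2 | he2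
    · exact Or.inr (Or.inl he2)
    · rw [Finset.mem_erase] at he2
      exact Or.inr (Or.inr ⟨he2.2, he2.1⟩)
  have hTmem : ∀ x, x ∈ S → x ≠ M → x ∈ T := fun x hx h1 =>
    Finset.mem_insert_of_mem (Finset.mem_insert_of_mem (Finset.mem_erase.2 ⟨h1, hx⟩))
  -- cardinality
  have hcard : S.card + 1 = T.card := by
    have h1 : T.card = (insert (a - 1) (S.erase M)).card + 1 :=
      Finset.card_insert_of_notMem hknotin2
    have h2 : (insert (a - 1) (S.erase M)).card = (S.erase M).card + 1 :=
      Finset.card_insert_of_notMem ha1notin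
    have h3 : (S.erase M).card = S.card - 1 := Finset.card_erase_of_mem hMS
    have h4 : 1 ≤ S.card := Finset.card_pos.2 h
    omega
  -- sum
  have hsum : T.sum id = S.sum id := by
    have h1 : T.sum id = (M + 1 - a) + (insert (a - 1) (S.erase M)).sum id :=
      Finset.sum_insert hknotin2
    have h2 : (insert (a - 1) (S.erase M)).sum id = (a - 1) + (S.erase M).sum id :=
      Finset.sum_insert ha1notin
    have h3 : M + (S.erase M).sum id = S.sum id := Finset.add_sum_erase _ id hMS
    omega
  have hT0 : 0 ∉ T := by
    intro hc
    rcases hTsub 0 hc with he | he | he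
    · omega
    · omega
    · exact h0 he.1
  have hTne : T.Nonempty := Finset.insert_nonempty _ _
  -- max of T
  have hTmax : T.max' hTne = M - 1 := by
    apply le_antisymm
    · apply Finset.max'_le
      intro y hy
      rcases hTsub y hy with he | he | he
      · omega
      · omega
      · have := S.le_max' y he.1
        omega
    · apply Finset.le_max'
      rcases Nat.lt_or_ge a M with hc | hc
      · exact hTmem (M - 1) (stair_subset S h (Finset.mem_Icc.2 ⟨by omega, by omega⟩)) (by omega)
      · have hae : a = M := by omega
        exact Finset.mem_insert_of_mem (Finset.mem_insert.2 (Or.inl (by omega)))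
  -- min of T
  have hTmin : T.min' hTne = M + 1 - a := by
    apply le_antisymm
    · exact Finset.min'_le _ _ (Finset.mem_insert_self _ _)
    · apply Finset.le_min'
      intro y hy
      rcases hTsub y hy with he | he | he
      · omega
      · omega
      · have := S.min'_le _ he.1
        omega
  -- stair of T is ≤ a - 1
  have hTstair : stair T hTne ≤ a - 1 := by
    apply Nat.find_le
    intro x hxmem
    rw [Finset.mem_Icc, hTmax] at hxmem
    rcases Nat.eq_or_lt_of_le hxmem.1 with he | hl
    · exact Finset.mem_insert_of_mem (Finset.mem_insert.2 (Or.inl he.symm))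
    · exact hTmem x (stair_subset S h (Finset.mem_Icc.2 ⟨by omega, by omega⟩)) (by omega)
  -- frank T
  have hbranch : T.min' hTne + stair T hTne ≤ T.max' hTne + 1 := by
    rw [hTmin, hTmax]
    omega
  have hback : frank T = S := by
    rw [frank, dif_pos hTne, if_pos hbranch, hTmax, hTmin]
    have e1 : M - 1 + 1 = M := by omega
    have e2 : M - 1 - (M + 1 - a) + 1 = a - 1 := by omega
    rw [e1, e2, hTdef, Finset.erase_insert hknotin2, Finset.erase_insert ha1notin,
      Finset.insert_erase hMS]
  -- non-exceptional
  have hTexc : ¬ excep T := by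
    rintro ⟨j, hj1, hcase | hcase⟩
    · obtain ⟨hd1, hd2, hd3⟩ := icc_data j (2*j-1) hj1 (by omega) T hTne hcase
      rw [hTmax] at hd1
      rw [hTmin] at hd2
      omega
    · obtain ⟨hd1, hd2, hd3⟩ := icc_data (j+1) (2*j) (by omega) (by omega) T hTne hcase
      rw [hTmax] at hd1
      rw [hTmin] at hd2
      omega
  rw [hfr]
  exact ⟨hT0, hsum, hcard, hTne, hTexc, hback⟩
/-- Combined involution lemma. -/
lemma frank_key (S : Finset ℕ) (h0 : 0 ∉ S) (hne : S.Nonempty) (hexc : ¬ excep S) :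
    0 ∉ frank S ∧ (frank S).sum id = S.sum id ∧ ¬ excep (frank S) ∧ frank (frank S) = S ∧
      ((-1 : ℤ) ^ (frank S).card = -(-1) ^ S.card) ∧ frank S ≠ S := by
  by_cases hc : S.min' hne + stair S hne ≤ S.max' hne + 1
  · obtain ⟨a1, a2, a3, _, a5, a6⟩ := caseA S hne h0 hexc hc
    refine ⟨a1, a2, a5, a6, ?_, ?_⟩
    · rw [← a3, pow_succ]
      ring
    · intro he
      rw [he] at a3
      omega
  · obtain ⟨a1, a2, a3, _, a5, a6⟩ := caseB S hne h0 hexc hc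
    refine ⟨a1, a2, a5, a6, ?_, ?_⟩
    · rw [← a3, pow_succ]
      ring
    · intro he
      rw [he] at a3
      omega

/-- The finset of all partitions of `n` into distinct (positive) parts,
realized as finsets of positive integers summing to `n`. -/
def pset (n : ℕ) : Finset (Finset ℕ) :=
  (Finset.range (n+1)).powerset.filter (fun S => 0 ∉ S ∧ S.sum id = n)

lemma mem_pset {n : ℕ} {S : Finset ℕ} : S ∈ pset n ↔ 0 ∉ S ∧ S.sum id = n := by
  simp only [pset, Finset.mem_filter, Finset.mem_powerset]
  constructor
  · tauto
  · rintro ⟨h1, h2⟩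
    refine ⟨?_, h1, h2⟩
    intro x hx
    rw [Finset.mem_range]
    have h3 := Finset.single_le_sum (f := id) (fun i _ => Nat.zero_le i) hx
    simp only [id] at h3 h2
    omega

lemma sum_Icc_id' (d a : ℕ) : 2 * (Finset.Icc a (a + d)).sum id = (2 * a + d) * (d + 1) := by
  induction d with
  | zero => simp [Finset.Icc_self]
  | succ d IH =>
    have hins : Finset.Icc a (a + (d + 1)) = insert (a + d + 1) (Finset.Icc a (a + d)) := by
      ext x
      simp only [Finset.mem_Icc, Finset.mem_insert]
      omega
    have hnot : a + d + 1 ∉ Finset.Icc a (a + d) := by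
      simp only [Finset.mem_Icc]
      omega
    rw [hins, Finset.sum_insert hnot, Nat.mul_add, IH]
    simp only [id]
    ring

lemma sum_Icc1 (j : ℕ) (hj : 1 ≤ j) : 2 * (Finset.Icc j (2*j-1)).sum id = j * (3*j-1) := by
  have he : 2*j-1 = j + (j-1) := by omega
  rw [he, sum_Icc_id' (j-1) j]
  have h1 : 2*j + (j-1) = 3*j-1 := by omega
  have h2 : (j-1) + 1 = j := by omega
  rw [h1, h2, Nat.mul_comm]

lemma sum_Icc2 (j : ℕ) (hj : 1 ≤ j) : 2 * (Finset.Icc (j+1) (2*j)).sum id = j * (3*j+1) := by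
  have he : 2*j = (j+1) + (j-1) := by omega
  rw [he, sum_Icc_id' (j-1) (j+1)]
  have h1 : 2*(j+1) + (j-1) = 3*j+1 := by omega
  have h2 : (j-1) + 1 = j := by omega
  rw [h1, h2, Nat.mul_comm]

lemma pent_inj1 (i j : ℕ) (h : i*(3*i+1) = j*(3*j+1)) : i = j := by
  rcases lt_trichotomy i j with hc | hc | hc
  · nlinarith
  · exact hc
  · nlinarith

lemma pent_inj2 (i j : ℕ) (hi : 1 ≤ i) (hj : 1 ≤ j) (h : i*(3*i-1) = j*(3*j-1)) : i = j := by
  obtain ⟨i', rfl⟩ : ∃ i', i = i' + 1 := ⟨i - 1, by omega⟩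
  obtain ⟨j', rfl⟩ : ∃ j', j = j' + 1 := ⟨j - 1, by omega⟩
  have e1 : 3*(i'+1)-1 = 3*i'+2 := by omega
  have e2 : 3*(j'+1)-1 = 3*j'+2 := by omega
  rw [e1, e2] at h
  rcases lt_trichotomy i' j' with hc | hc | hc
  · nlinarith
  · omega
  · nlinarith

lemma pent_inj3 (i j : ℕ) (hi : 1 ≤ i) (hj : 1 ≤ j) (h : i*(3*i+1) = j*(3*j-1)) : False := by
  obtain ⟨j', rfl⟩ : ∃ j', j = j' + 1 := ⟨j - 1, by omega⟩
  have e2 : 3*(j'+1)-1 = 3*j'+2 := by omega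
  rw [e2] at h
  rcases lt_trichotomy i (j'+1) with hc | hc | hc
  · nlinarith
  · nlinarith
  · nlinarith
/-- The signed sum vanishes on any family closed under `frank` whose members are
nonempty, zero-free and non-exceptional. -/
lemma sum_invol (s : Finset (Finset ℕ))
    (h1 : ∀ S ∈ s, 0 ∉ S ∧ S.Nonempty ∧ ¬ excep S)
    (h2 : ∀ S ∈ s, frank S ∈ s) :
    ∑ S ∈ s, (-1 : ℤ) ^ S.card = 0 := by
  apply Finset.sum_involution (fun S _ => frank S)
  · intro S hS
    obtain ⟨b1, b2, b3⟩ := h1 S hS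
    obtain ⟨_, _, _, _, c5, _⟩ := frank_key S b1 b2 b3
    rw [c5]
    ring
  · intro S hS _
    obtain ⟨b1, b2, b3⟩ := h1 S hS
    exact (frank_key S b1 b2 b3).2.2.2.2.2
  · intro S hS
    exact h2 S hS
  · intro S hS
    obtain ⟨b1, b2, b3⟩ := h1 S hS
    exact (frank_key S b1 b2 b3).2.2.2.1

/-- If `S₀` is the unique exceptional member of `pset n`, the signed sum is its sign. -/
lemma key_sum (n : ℕ) (hn : 1 ≤ n) (S₀ : Finset ℕ) (h₀ : S₀ ∈ pset n) (hexc₀ : excep S₀)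
    (huniq : ∀ S ∈ pset n, excep S → S = S₀) :
    ∑ S ∈ pset n, (-1 : ℤ) ^ S.card = (-1) ^ S₀.card := by
  rw [← Finset.add_sum_erase (pset n) (fun S => (-1 : ℤ) ^ S.card) h₀]
  have hz : ∑ S ∈ (pset n).erase S₀, (-1 : ℤ) ^ S.card = 0 := by
    apply sum_invol
    · intro S hS
      have hSp := Finset.mem_of_mem_erase hS
      have hSne := (Finset.mem_erase.1 hS).1
      obtain ⟨b1, b2⟩ := mem_pset.1 hSp
      refine ⟨b1, ?_, ?_⟩
      · rcases S.eq_empty_or_nonempty with he | he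
        · rw [he] at b2
          simp at b2
          omega
        · exact he
      · intro hc
        exact hSne (huniq S hSp hc)
    · intro S hS
      have hSp := Finset.mem_of_mem_erase hS
      have hSne := (Finset.mem_erase.1 hS).1
      obtain ⟨b1, b2⟩ := mem_pset.1 hSp
      have hSnon : S.Nonempty := by
        rcases S.eq_empty_or_nonempty with he | he
        · rw [he] at b2
          simp at b2
          omega
        · exact he
      have hSexc : ¬ excep S := fun hc => hSne (huniq S hSp hc)
      obtain ⟨c1, c2, c3, _, _, _⟩ := frank_key S b1 hSnon hSexc
      rw [Finset.mem_erase]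
      constructor
      · intro hc
        rw [hc] at c3
        exact c3 hexc₀
      · rw [mem_pset]
        exact ⟨c1, by rw [c2, b2]⟩
  rw [hz, add_zero]

/-- If there is no exceptional member, the signed sum vanishes. -/
lemma key_sum_zero (n : ℕ) (hn : 1 ≤ n) (hnone : ∀ S ∈ pset n, ¬ excep S) :
    ∑ S ∈ pset n, (-1 : ℤ) ^ S.card = 0 := by
  apply sum_invol
  · intro S hS
    obtain ⟨b1, b2⟩ := mem_pset.1 hS
    refine ⟨b1, ?_, hnone S hS⟩
    rcases S.eq_empty_or_nonempty with he | he
    · rw [he] at b2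
      simp at b2
      omega
    · exact he
  · intro S hS
    obtain ⟨b1, b2⟩ := mem_pset.1 hS
    have hSnon : S.Nonempty := by
      rcases S.eq_empty_or_nonempty with he | he
      · rw [he] at b2
        simp at b2
        omega
      · exact he
    obtain ⟨c1, c2, _, _, _, _⟩ := frank_key S b1 hSnon (hnone S hS)
    rw [mem_pset]
    exact ⟨c1, by rw [c2, b2]⟩

/-- Partitions of `n` with distinct parts satisfying a cardinality predicate correspond
to members of `pset n` satisfying it. -/
def pequiv (n : ℕ) (Q : ℕ → Prop) [DecidablePred Q] :
    {p : Nat.Partition n // p.parts.Nodup ∧ Q p.parts.card} ≃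
      {S : Finset ℕ // S ∈ (pset n).filter (fun S => Q S.card)} where
  toFun p := ⟨p.1.parts.toFinset, by
    obtain ⟨hnd, hQ⟩ := p.2
    have hval : p.1.parts.toFinset.val = p.1.parts := by
      rw [Multiset.toFinset_val, Multiset.dedup_eq_self.2 hnd]
    rw [Finset.mem_filter, mem_pset]
    refine ⟨⟨?_, ?_⟩, ?_⟩
    · intro hc
      rw [Multiset.mem_toFinset] at hc
      exact absurd (p.1.parts_pos hc) (by omega)
    · show (p.1.parts.toFinset.val.map id).sum = n
      rw [Multiset.map_id, hval, p.1.parts_sum]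
    · show Q p.1.parts.toFinset.card
      have : p.1.parts.toFinset.card = Multiset.card p.1.parts :=
        Multiset.toFinset_card_eq_card_iff_nodup.2 hnd
      rw [this]
      exact hQ⟩
  invFun S := ⟨⟨S.1.val, by
      intro i hi
      have h1 := (Finset.mem_filter.1 S.2).1
      have h2 := (mem_pset.1 h1).1
      have : i ∈ S.1 := hi
      rcases Nat.eq_zero_or_pos i with he | he
      · exact absurd (he ▸ this) h2
      · exact he, by
      have h1 := (Finset.mem_filter.1 S.2).1
      have h2 := (mem_pset.1 h1).2
      have : (S.1.val.map id).sum = n := h2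
      rwa [Multiset.map_id] at this⟩, S.1.nodup, (Finset.mem_filter.1 S.2).2⟩
  left_inv p := by
    obtain ⟨hnd, _⟩ := p.2
    apply Subtype.ext
    apply Nat.Partition.ext
    show p.1.parts.toFinset.val = p.1.parts
    rw [Multiset.toFinset_val, Multiset.dedup_eq_self.2 hnd]
  right_inv S := by
    apply Subtype.ext
    show S.1.val.toFinset = S.1
    exact Finset.val_toFinset S.1

lemma nat_card_eq (n : ℕ) (Q : ℕ → Prop) [DecidablePred Q] :
    Nat.card {p : Nat.Partition n // p.parts.Nodup ∧ Q p.parts.card} =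
      ((pset n).filter (fun S => Q S.card)).card := by
  rw [Nat.card_congr (pequiv n Q)]
  exact Nat.card_eq_finsetCard _

lemma diff_eq (n : ℕ) :
    (Nat.card {p : Nat.Partition n // p.parts.Nodup ∧ Even p.parts.card} : ℤ) -
      Nat.card {p : Nat.Partition n // p.parts.Nodup ∧ Odd p.parts.card} =
    ∑ S ∈ pset n, (-1 : ℤ) ^ S.card := by
  rw [nat_card_eq n Even, nat_card_eq n Odd]
  rw [← Finset.sum_filter_add_sum_filter_not (pset n) (fun S => Even S.card)
    (fun S => (-1 : ℤ) ^ S.card)]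
  have h1 : ∑ S ∈ (pset n).filter (fun S => Even S.card), (-1 : ℤ) ^ S.card =
      (((pset n).filter (fun S => Even S.card)).card : ℤ) := by
    rw [Finset.sum_congr rfl (fun S hS => (Finset.mem_filter.1 hS).2.neg_one_pow),
      Finset.sum_const, nsmul_eq_mul, mul_one]
  have hfe : (pset n).filter (fun S => ¬ Even S.card) =
      (pset n).filter (fun S => Odd S.card) := by
    apply Finset.filter_congr
    intro S _
    exact Nat.not_even_iff_odd
  have h2 : ∑ S ∈ (pset n).filter (fun S => ¬ Even S.card), (-1 : ℤ) ^ S.card =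
      -(((pset n).filter (fun S => Odd S.card)).card : ℤ) := by
    rw [hfe]
    rw [Finset.sum_congr rfl (fun S hS => (Finset.mem_filter.1 hS).2.neg_one_pow)]
    rw [Finset.sum_const, nsmul_eq_mul]
    ring
  rw [h1, h2]
  ring
lemma pset_zero : pset 0 = {∅} := by
  ext S
  rw [mem_pset, Finset.mem_singleton]
  constructor
  · rintro ⟨h1, h2⟩
    rcases S.eq_empty_or_nonempty with he | he
    · exact he
    · exfalso
      obtain ⟨x, hx⟩ := he
      have h3 := Finset.single_le_sum (f := id) (fun i _ => Nat.zero_le i) hx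
      simp only [id] at h3 h2
      have hx0 : x ≠ 0 := fun hc => h1 (hc ▸ hx)
      omega
  · rintro rfl
    simp

/-- Legendre's theorem (Euler's pentagonal number theorem): the number of partitions of
`n` into an even number of distinct parts minus the number into an odd number of distinct
parts is `(-1)^j` if `n = j(3j±1)/2` for some `j ≥ 0`, and `0` otherwise. -/
theorem legendre_pentagonal (n : ℕ) :
    (∀ j : ℕ, (2 * n = j * (3 * j + 1) ∨ 2 * n = j * (3 * j - 1)) →
      (Nat.card {p : Nat.Partition n // p.parts.Nodup ∧ Even p.parts.card} : ℤ) -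
        Nat.card {p : Nat.Partition n // p.parts.Nodup ∧ Odd p.parts.card} = (-1) ^ j) ∧
    ((¬ ∃ j : ℕ, 2 * n = j * (3 * j + 1) ∨ 2 * n = j * (3 * j - 1)) →
      (Nat.card {p : Nat.Partition n // p.parts.Nodup ∧ Even p.parts.card} : ℤ) -
        Nat.card {p : Nat.Partition n // p.parts.Nodup ∧ Odd p.parts.card} = 0) := by
  constructor
  · intro j hj
    rw [diff_eq]
    rcases Nat.eq_zero_or_pos j with rfl | hj1
    · have hn : n = 0 := by rcases hj with hj | hj <;> omega
      subst hn
      rw [pset_zero]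
      simp
    · have hn : 1 ≤ n := by
        have h2 : 2 ≤ j * (3 * j + 1) := le_trans (by omega)
          (Nat.mul_le_mul hj1 (by omega : 2 ≤ 3 * j + 1))
        have h3 : 2 ≤ j * (3 * j - 1) := le_trans (by omega)
          (Nat.mul_le_mul hj1 (by omega : 2 ≤ 3 * j - 1))
        rcases hj with hj | hj <;> omega
      rcases hj with hj | hj
      · -- 2n = j(3j+1), the exceptional set is Icc (j+1) (2j)
        have hmem : Finset.Icc (j+1) (2*j) ∈ pset n := by
          rw [mem_pset]
          refine ⟨?_, ?_⟩
          · intro hc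
            rw [Finset.mem_Icc] at hc
            omega
          · have := sum_Icc2 j hj1
            linarith
        have hexc : excep (Finset.Icc (j+1) (2*j)) := ⟨j, hj1, Or.inr rfl⟩
        have huniq : ∀ S ∈ pset n, excep S → S = Finset.Icc (j+1) (2*j) := by
          rintro S hS ⟨i, hi1, hcase | hcase⟩
          · exfalso
            have hsum := (mem_pset.1 hS).2
            rw [hcase] at hsum
            have hs1 := sum_Icc1 i hi1
            exact pent_inj3 j i hj1 hi1 (by linarith)
          · have hsum := (mem_pset.1 hS).2
            rw [hcase] at hsum
            have hs2 := sum_Icc2 i hi1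
            have hij : i = j := pent_inj1 i j (by linarith)
            rw [hcase, hij]
        rw [key_sum n hn _ hmem hexc huniq, Nat.card_Icc]
        congr 1
        omega
      · -- 2n = j(3j-1), the exceptional set is Icc j (2j-1)
        have hmem : Finset.Icc j (2*j-1) ∈ pset n := by
          rw [mem_pset]
          refine ⟨?_, ?_⟩
          · intro hc
            rw [Finset.mem_Icc] at hc
            omega
          · have := sum_Icc1 j hj1
            linarith
        have hexc : excep (Finset.Icc j (2*j-1)) := ⟨j, hj1, Or.inl rfl⟩
        have huniq : ∀ S ∈ pset n, excep S → S = Finset.Icc j (2*j-1) := by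
          rintro S hS ⟨i, hi1, hcase | hcase⟩
          · have hsum := (mem_pset.1 hS).2
            rw [hcase] at hsum
            have hs1 := sum_Icc1 i hi1
            have hij : i = j := pent_inj2 i j hi1 hj1 (by linarith)
            rw [hcase, hij]
          · exfalso
            have hsum := (mem_pset.1 hS).2
            rw [hcase] at hsum
            have hs2 := sum_Icc2 i hi1
            exact pent_inj3 i j hi1 hj1 (by linarith)
        rw [key_sum n hn _ hmem hexc huniq, Nat.card_Icc]
        congr 1
        omega
  · intro hne
    rw [diff_eq]
    have hn : 1 ≤ n := by
      by_contra hc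
      push_neg at hc
      exact hne ⟨0, Or.inl (by omega)⟩
    apply key_sum_zero n hn
    rintro S hS ⟨i, hi1, hcase | hcase⟩
    · have hsum := (mem_pset.1 hS).2
      rw [hcase] at hsum
      have hs1 := sum_Icc1 i hi1
      exact hne ⟨i, Or.inr (by linarith)⟩
    · have hsum := (mem_pset.1 hS).2
      rw [hcase] at hsum
      have hs2 := sum_Icc2 i hi1
      exact hne ⟨i, Or.inl (by linarith)⟩
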